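/- For all integers k ≥ 1, t ≥ 0 and 1 ≤ ℓ ≤ k, the matching polynomial of the graph K'(k,t;ℓ) is μ(K'(k,t;ℓ),x) = x^{k+t−2} (x⁴ − (k+t+ℓ+1)x² + (ℓ+t)(k−1) + t). -/

import Mathlib

open Polynomial

/-- The graph obtained from `G` by deleting the vertex `u` and all incident edges. -/
def SimpleGraph.deleteVertex {V : Type*} (G : SimpleGraph V) (u : V) :
    SimpleGraph {v : V // v ≠ u} where
  Adj a b := G.Adj a b
  symm := ⟨fun _ _ h => G.adj_symm h⟩
  loopless := ⟨fun a h => G.irrefl h⟩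

/-- `s` is a matching in `G`: a set of edges of `G` that are pairwise non-incident. -/
def SimpleGraph.IsMatchingFinset {V : Type*} (G : SimpleGraph V) (s : Finset (Sym2 V)) : Prop :=
  ↑s ⊆ G.edgeSet ∧ (s : Set (Sym2 V)).Pairwise fun e f => ∀ v ∈ e, v ∉ f

/-- `m(G,k)`: the number of `k`-matchings in `G`. -/
noncomputable def SimpleGraph.numMatchings {V : Type*} (G : SimpleGraph V) (k : ℕ) : ℕ :=
  {s : Finset (Sym2 V) | s.card = k ∧ G.IsMatchingFinset s}.ncard

/-- The matching polynomial `μ(G,x) = ∑_k (-1)^k m(G,k) x^(n-2k)`. -/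
noncomputable def SimpleGraph.matchingPolynomial {V : Type*} [Fintype V] (G : SimpleGraph V) :
    Polynomial ℝ :=
  ∑ k ∈ Finset.range (Fintype.card V + 1),
    C ((-1 : ℝ) ^ k * (G.numMatchings k : ℝ)) * X ^ (Fintype.card V - 2 * k)

/-- The graph `K'(k,t;ℓ)`: a star `K_{1,k}` with centre `some (Sum.inl none)` and leaves
`some (Sum.inl (some j))`, `t` further vertices `some (Sum.inr i)`, and an extra vertex `none`
adjacent to exactly the first `ℓ` leaves of the star, to its centre, and to all `t` further
vertices. -/
def KGraph' (k t ℓ : ℕ) : SimpleGraph (Option (Option (Fin k) ⊕ Fin t)) :=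
  SimpleGraph.fromRel fun x y =>
    (∃ j : Fin k, x = some (Sum.inl none) ∧ y = some (Sum.inl (some j))) ∨
    (x = none ∧ y = some (Sum.inl none)) ∨
    (∃ j : Fin k, (j : ℕ) < ℓ ∧ x = none ∧ y = some (Sum.inl (some j))) ∨
    (∃ i : Fin t, x = none ∧ y = some (Sum.inr i))

namespace KG
variable {k t ℓ : ℕ}

abbrev V (k t : ℕ) := Option (Option (Fin k) ⊕ Fin t)
def u : V k t := none
def c : V k t := some (Sum.inl none)
def v (j : Fin k) : V k t := some (Sum.inl (some j))
def w (i : Fin t) : V k t := some (Sum.inr i)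

lemma edge_iff (e : Sym2 (V k t)) :
    e ∈ (KGraph' k t ℓ).edgeSet ↔
      (∃ j : Fin k, e = s(c, v j)) ∨ e = s(u, c) ∨
      (∃ j : Fin k, (j : ℕ) < ℓ ∧ e = s(u, v j)) ∨ (∃ i : Fin t, e = s(u, w i)) := by
  induction e using Sym2.ind with
  | _ x y =>
    simp only [SimpleGraph.mem_edgeSet, KGraph', SimpleGraph.fromRel_adj, Sym2.eq, Sym2.rel_iff',
      u, c, v, w, Prod.mk.injEq, Prod.swap_prod_mk]
    constructor
    · rintro ⟨hne, (⟨j,rfl,rfl⟩|⟨rfl,rfl⟩|⟨j,hj,rfl,rfl⟩|⟨i,rfl,rfl⟩)|(⟨j,rfl,rfl⟩|⟨rfl,rfl⟩|⟨j,hj,rfl,rfl⟩|⟨i,rfl,rfl⟩)⟩ <;>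
        simp_all <;> tauto
    · rintro (⟨j, h⟩ | h | ⟨j, hj, h⟩ | ⟨i, h⟩) <;> rcases h with ⟨rfl,rfl⟩|⟨rfl,rfl⟩
      · exact ⟨by simp, Or.inl (Or.inl ⟨j, rfl, rfl⟩)⟩
      · exact ⟨by simp, Or.inr (Or.inl ⟨j, rfl, rfl⟩)⟩
      · exact ⟨by simp, Or.inl (Or.inr (Or.inl ⟨rfl, rfl⟩))⟩
      · exact ⟨by simp, Or.inr (Or.inr (Or.inl ⟨rfl, rfl⟩))⟩
      · exact ⟨by simp, Or.inl (Or.inr (Or.inr (Or.inl ⟨j, hj, rfl, rfl⟩)))⟩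
      · exact ⟨by simp, Or.inr (Or.inr (Or.inr (Or.inl ⟨j, hj, rfl, rfl⟩)))⟩
      · exact ⟨by simp, Or.inl (Or.inr (Or.inr (Or.inr ⟨i, rfl, rfl⟩)))⟩
      · exact ⟨by simp, Or.inr (Or.inr (Or.inr (Or.inr ⟨i, rfl, rfl⟩)))⟩

end KG

namespace KG2
open KG
variable {k t ℓ : ℕ}

-- distinctness simp lemmas
example (j : Fin k) : (u : V k t) ≠ c := by simp [u, c]
example (j : Fin k) : (u : V k t) ≠ v j := by simp [u, v]
example (i : Fin t) : (u : V k t) ≠ w i := by simp [u, w]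
example (j : Fin k) : (c : V k t) ≠ v j := by simp [c, v]
example (i : Fin t) : (c : V k t) ≠ w i := by simp [c, w]
example (j : Fin k) (i : Fin t) : (v j : V k t) ≠ w i := by simp [v, w]
example (j j' : Fin k) : (v j : V k t) = v j' ↔ j = j' := by simp [v]

lemma mem_u_or_c {e : Sym2 (V k t)} (he : e ∈ (KGraph' k t ℓ).edgeSet) :
    (u : V k t) ∈ e ∨ (c : V k t) ∈ e := by
  rcases (edge_iff e).1 he with ⟨j, rfl⟩ | rfl | ⟨j, hj, rfl⟩ | ⟨i, rfl⟩ <;> simp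

lemma card_le_two {s : Finset (Sym2 (V k t))} (hs : (KGraph' k t ℓ).IsMatchingFinset s) :
    s.card ≤ 2 := by
  obtain ⟨hsub, hpw⟩ := hs
  classical
  have h1 : (s.filter (fun e => (u : V k t) ∈ e)).card ≤ 1 := by
    refine Finset.card_le_one.2 fun e he f hf => ?_
    simp only [Finset.mem_filter] at he hf
    by_contra hne
    exact hpw he.1 hf.1 hne u he.2 hf.2
  have h2 : (s.filter (fun e => (u : V k t) ∉ e)).card ≤ 1 := by
    refine Finset.card_le_one.2 fun e he f hf => ?_
    simp only [Finset.mem_filter] at he hf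
    by_contra hne
    have hce : (c : V k t) ∈ e := (mem_u_or_c (hsub he.1)).resolve_left he.2
    have hcf : (c : V k t) ∈ f := (mem_u_or_c (hsub hf.1)).resolve_left hf.2
    exact hpw he.1 hf.1 hne c hce hcf
  calc s.card = _ + _ := (Finset.card_filter_add_card_filter_not
        (p := fun e => (u : V k t) ∈ e)).symm
  _ ≤ 2 := by omega

lemma numMatchings_ge_three (m : ℕ) (hm : 3 ≤ m) :
    (KGraph' k t ℓ).numMatchings m = 0 := by
  have : {s : Finset (Sym2 (V k t)) | s.card = m ∧ (KGraph' k t ℓ).IsMatchingFinset s} = ∅ := by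
    ext s
    simp only [Set.mem_setOf_eq, Set.mem_empty_iff_false, iff_false, not_and]
    intro hcard hmatch
    have := card_le_two hmatch
    omega
  rw [SimpleGraph.numMatchings, this, Set.ncard_empty]

lemma numMatchings_zero : (KGraph' k t ℓ).numMatchings 0 = 1 := by
  have : {s : Finset (Sym2 (V k t)) | s.card = 0 ∧ (KGraph' k t ℓ).IsMatchingFinset s}
      = {∅} := by
    ext s
    simp only [Set.mem_setOf_eq, Finset.card_eq_zero, Set.mem_singleton_iff]
    constructor
    · rintro ⟨rfl, _⟩; rfl
    · rintro rfl
      exact ⟨rfl, by simp [SimpleGraph.IsMatchingFinset], by simp⟩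
  rw [SimpleGraph.numMatchings, this, Set.ncard_singleton]

end KG2

namespace KG3
open KG
variable {k t ℓ : ℕ}

def E1 (k t : ℕ) : Finset (Sym2 (V k t)) := Finset.univ.image fun j : Fin k => s(c, v j)
def E2 (k t ℓ : ℕ) (hℓk : ℓ ≤ k) : Finset (Sym2 (V k t)) :=
  Finset.univ.image fun j : Fin ℓ => s(u, v (Fin.castLE hℓk j))
def E3 (k t : ℕ) : Finset (Sym2 (V k t)) := Finset.univ.image fun i : Fin t => s(u, w i)
def EAll (k t ℓ : ℕ) (hℓk : ℓ ≤ k) : Finset (Sym2 (V k t)) :=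
  E1 k t ∪ ({s(u, c)} ∪ E2 k t ℓ hℓk ∪ E3 k t)

lemma mem_EAll (hℓk : ℓ ≤ k) (e : Sym2 (V k t)) :
    e ∈ EAll k t ℓ hℓk ↔ e ∈ (KGraph' k t ℓ).edgeSet := by
  rw [edge_iff]
  simp only [EAll, E1, E2, E3, Finset.mem_union, Finset.mem_image, Finset.mem_univ,
    Finset.mem_singleton, true_and]
  constructor
  · rintro ((⟨j, rfl⟩) | (rfl | ⟨j, rfl⟩) | ⟨i, rfl⟩)
    · exact Or.inl ⟨j, rfl⟩
    · exact Or.inr (Or.inl rfl)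
    · exact Or.inr (Or.inr (Or.inl ⟨Fin.castLE hℓk j, j.2, rfl⟩))
    · exact Or.inr (Or.inr (Or.inr ⟨i, rfl⟩))
  · rintro (⟨j, rfl⟩ | rfl | ⟨j, hj, rfl⟩ | ⟨i, rfl⟩)
    · exact Or.inl ⟨j, rfl⟩
    · exact Or.inr (Or.inl (Or.inl rfl))
    · refine Or.inr (Or.inl (Or.inr ⟨⟨(j : ℕ), hj⟩, ?_⟩))
      have : Fin.castLE hℓk ⟨(j : ℕ), hj⟩ = j := Fin.ext rfl
      rw [this]
    · exact Or.inr (Or.inr ⟨i, rfl⟩)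

lemma card_EAll (hℓk : ℓ ≤ k) : (EAll k t ℓ hℓk).card = k + 1 + ℓ + t := by
  have hc1 : (E1 k t).card = k := by
    rw [E1, Finset.card_image_of_injective _ (fun a b hab => by
      simpa [c, v, Sym2.eq_iff] using hab), Finset.card_univ, Fintype.card_fin]
  have hc2 : (E2 k t ℓ hℓk).card = ℓ := by
    rw [E2, Finset.card_image_of_injective _ (fun a b hab => by
      simpa [u, c, v, Sym2.eq_iff, Fin.castLE, Fin.ext_iff] using hab),
      Finset.card_univ, Fintype.card_fin]
  have hc3 : (E3 k t).card = t := by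
    rw [E3, Finset.card_image_of_injective _ (fun a b hab => by
      simpa [u, w, Sym2.eq_iff] using hab), Finset.card_univ, Fintype.card_fin]
  have d23 : Disjoint (E2 k t ℓ hℓk) (E3 k t) := by
    simp only [Finset.disjoint_left, E2, E3, Finset.mem_image, Finset.mem_univ, true_and]
    rintro e ⟨j, rfl⟩ ⟨i, he⟩
    simp [u, v, w, Sym2.eq_iff] at he
  have d123 : Disjoint ({s(u, c)} : Finset (Sym2 (V k t))) (E2 k t ℓ hℓk ∪ E3 k t) := by
    simp only [Finset.disjoint_left, Finset.mem_singleton, Finset.mem_union, E2, E3,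
      Finset.mem_image, Finset.mem_univ, true_and]
    rintro e rfl (⟨j, he⟩ | ⟨i, he⟩) <;> simp [u, c, v, w, Sym2.eq_iff] at he
  have d0 : Disjoint (E1 k t) ({s(u, c)} ∪ E2 k t ℓ hℓk ∪ E3 k t) := by
    simp only [Finset.disjoint_left, E1, E2, E3, Finset.mem_union, Finset.mem_singleton,
      Finset.mem_image, Finset.mem_univ, true_and]
    rintro e ⟨j, rfl⟩ ((he | ⟨j', he⟩) | ⟨i, he⟩) <;>
      simp [u, c, v, w, Sym2.eq_iff] at he
  have dA : Disjoint ({s(u, c)} : Finset (Sym2 (V k t))) (E2 k t ℓ hℓk) :=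
    (Finset.disjoint_union_right.1 d123).1
  have dB : Disjoint (({s(u, c)} : Finset (Sym2 (V k t))) ∪ E2 k t ℓ hℓk) (E3 k t) :=
    Finset.disjoint_union_left.2 ⟨(Finset.disjoint_union_right.1 d123).2, d23⟩
  rw [EAll, Finset.card_union_of_disjoint d0, Finset.card_union_of_disjoint dB,
    Finset.card_union_of_disjoint dA, hc1, hc2, hc3, Finset.card_singleton]
  omega

end KG3

namespace KG4
open KG KG3
variable {k t ℓ : ℕ}

lemma numMatchings_one (hℓk : ℓ ≤ k) : (KGraph' k t ℓ).numMatchings 1 = k + 1 + ℓ + t := by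
  have hset : {s : Finset (Sym2 (V k t)) | s.card = 1 ∧ (KGraph' k t ℓ).IsMatchingFinset s}
      = (fun e => ({e} : Finset (Sym2 (V k t)))) '' (KGraph' k t ℓ).edgeSet := by
    ext s
    simp only [Set.mem_setOf_eq, Set.mem_image, SimpleGraph.mem_edgeSet]
    constructor
    · rintro ⟨hcard, hsub, _⟩
      obtain ⟨e, rfl⟩ := Finset.card_eq_one.1 hcard
      exact ⟨e, hsub (by simp), rfl⟩
    · rintro ⟨e, he, rfl⟩
      exact ⟨Finset.card_singleton e, by simpa using he, by simp⟩
  have hinj : Function.Injective (fun e : Sym2 (V k t) => ({e} : Finset (Sym2 (V k t)))) :=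
    fun a b hab => by simpa using hab
  have hE : (KGraph' k t ℓ).edgeSet = ↑(EAll k t ℓ hℓk) := by
    ext e; rw [← mem_EAll hℓk]; simp
  rw [SimpleGraph.numMatchings, hset, Set.ncard_image_of_injective _ hinj, hE,
    Set.ncard_coe_finset, card_EAll]

end KG4

namespace KG5
open KG
variable {k t ℓ : ℕ}

/-- the u-edge indexed by `Fin ℓ ⊕ Fin t` -/
def uE (hℓk : ℓ ≤ k) : Fin ℓ ⊕ Fin t → Sym2 (V k t)
  | Sum.inl j' => s(u, v (Fin.castLE hℓk j'))
  | Sum.inr i => s(u, w i)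

def gM (hℓk : ℓ ≤ k) (p : Fin k × (Fin ℓ ⊕ Fin t)) : Finset (Sym2 (V k t)) :=
  {s(c, v p.1), uE hℓk p.2}

def PM (p : Fin k × (Fin ℓ ⊕ Fin t)) : Prop :=
  ∀ j' : Fin ℓ, p.2 = Sum.inl j' → (j' : ℕ) ≠ (p.1 : ℕ)

instance : DecidablePred (PM (k := k) (t := t) (ℓ := ℓ)) := fun p => by
  unfold PM; infer_instance

lemma star_ne_uE (hℓk : ℓ ≤ k) (j : Fin k) (x : Fin ℓ ⊕ Fin t) :
    s(c, v j) ≠ uE hℓk x := by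
  cases x <;> simp [uE, u, c, v, w, Sym2.eq_iff]

lemma u_mem_uE (hℓk : ℓ ≤ k) (x : Fin ℓ ⊕ Fin t) : (u : V k t) ∈ uE hℓk x := by
  cases x <;> simp [uE]

lemma u_not_mem_star (j : Fin k) : (u : V k t) ∉ s(c, v j) := by
  simp [u, c, v, Sym2.mem_iff]

lemma uE_inj (hℓk : ℓ ≤ k) : Function.Injective (uE (k := k) (t := t) hℓk) := by
  rintro (a | a) (b | b) hab <;>
    simp [uE, u, v, w, Sym2.eq_iff, Fin.ext_iff, Fin.castLE] at hab <;> simp [hab] <;>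
    exact Fin.ext hab

lemma gM_inj (hℓk : ℓ ≤ k) : Function.Injective (gM (k := k) (t := t) hℓk) := by
  rintro ⟨j, x⟩ ⟨j', x'⟩ h
  simp only [gM] at h
  have h1 : s(c, v j) ∈ ({s(c, v j'), uE hℓk x'} : Finset (Sym2 (V k t))) := by
    rw [← h]; simp
  have h2 : uE hℓk x ∈ ({s(c, v j'), uE hℓk x'} : Finset (Sym2 (V k t))) := by
    rw [← h]; simp
  rw [Finset.mem_insert, Finset.mem_singleton] at h1 h2
  have e1 : s(c, v j) = s(c, v j') := h1.resolve_right (star_ne_uE hℓk j x')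
  have e2 : uE hℓk x = uE hℓk x' :=
    h2.resolve_left (fun hh => star_ne_uE hℓk j' x hh.symm)
  have : j = j' := by simpa [c, v, Sym2.eq_iff] using e1
  exact Prod.ext this (uE_inj hℓk e2)

lemma matching_gM (hℓk : ℓ ≤ k) {p : Fin k × (Fin ℓ ⊕ Fin t)} (hp : PM p) :
    (KGraph' k t ℓ).IsMatchingFinset (gM hℓk p) := by
  obtain ⟨j, x⟩ := p
  constructor
  · intro e he
    simp only [gM, Finset.coe_insert, Finset.coe_singleton, Set.mem_insert_iff,
      Set.mem_singleton_iff] at he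
    rcases he with rfl | rfl
    · exact (edge_iff _).2 (Or.inl ⟨j, rfl⟩)
    · cases x with
      | inl j' => exact (edge_iff _).2 (Or.inr (Or.inr (Or.inl ⟨Fin.castLE hℓk j', j'.2, rfl⟩)))
      | inr i => exact (edge_iff _).2 (Or.inr (Or.inr (Or.inr ⟨i, rfl⟩)))
  · have hdisj : ∀ a ∈ s(c, v j), a ∉ uE hℓk x := by
      intro a ha
      rw [Sym2.mem_iff] at ha
      cases x with
      | inl j' =>
        have hne : (Fin.castLE hℓk j' : Fin k) ≠ j := by
          intro hh; exact hp j' rfl (by simpa [Fin.ext_iff, Fin.castLE] using hh)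
        rcases ha with rfl | rfl <;>
          simp [uE, u, c, v, Sym2.mem_iff] <;>
          exact fun hh => hne (Fin.ext (by simpa [Fin.ext_iff] using hh)).symm
      | inr i =>
        rcases ha with rfl | rfl <;> simp [uE, u, c, v, w, Sym2.mem_iff]
    intro e he f hf hne
    simp only [gM, Finset.coe_insert, Finset.coe_singleton, Set.mem_insert_iff,
      Set.mem_singleton_iff] at he hf
    rcases he with rfl | rfl <;> rcases hf with rfl | rfl
    · exact absurd rfl hne
    · exact hdisj
    · exact fun a ha haf => hdisj a haf ha
    · exact absurd rfl hne

end KG5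

namespace KG6
open KG KG5
variable {k t ℓ : ℕ}

lemma edge_split {e : Sym2 (V k t)} (he : e ∈ (KGraph' k t ℓ).edgeSet) :
    (∃ j : Fin k, e = s(c, v j)) ∨ (u : V k t) ∈ e := by
  rcases (edge_iff e).1 he with ⟨j, rfl⟩ | rfl | ⟨j, hj, rfl⟩ | ⟨i, rfl⟩
  · exact Or.inl ⟨j, rfl⟩
  all_goals exact Or.inr (by simp)

lemma helper_case (hℓk : ℓ ≤ k) {f : Sym2 (V k t)} (j : Fin k)
    (hf : f ∈ (KGraph' k t ℓ).edgeSet) (hfu : (u : V k t) ∈ f)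
    (hd1 : ∀ a ∈ s(c, v j), a ∉ f) :
    ∃ p, PM p ∧ gM hℓk p = ({s(c, v j), f} : Finset (Sym2 (V k t))) := by
  rcases (edge_iff f).1 hf with ⟨j2, rfl⟩ | rfl | ⟨j2, hj2, rfl⟩ | ⟨i, rfl⟩
  · exact absurd hfu (u_not_mem_star j2)
  · exact absurd (by simp : (c : V k t) ∈ s(u, c)) (hd1 c (by simp))
  · refine ⟨(j, Sum.inl ⟨(j2 : ℕ), hj2⟩), ?_, ?_⟩
    · rintro j' hj' 
      obtain rfl : j' = ⟨(j2 : ℕ), hj2⟩ := by simpa using hj'.symm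
      intro hval
      exact hd1 (v j) (by simp) (by
        have : j2 = j := Fin.ext hval
        subst this
        simp [Sym2.mem_iff])
    · have : Fin.castLE hℓk ⟨(j2 : ℕ), hj2⟩ = j2 := Fin.ext rfl
      simp [gM, uE, this]
  · exact ⟨(j, Sum.inr i), fun j' hj' => by simp at hj', by simp [gM, uE]⟩

lemma numMatchings_two (hℓk : ℓ ≤ k) :
    (KGraph' k t ℓ).numMatchings 2 = k * (ℓ + t) - ℓ := by
  classical
  have hset : {s : Finset (Sym2 (V k t)) | s.card = 2 ∧ (KGraph' k t ℓ).IsMatchingFinset s}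
      = ↑((Finset.univ.filter (PM (k := k) (t := t) (ℓ := ℓ))).image (gM hℓk)) := by
    ext s
    simp only [Set.mem_setOf_eq, Finset.coe_image, Set.mem_image, Finset.mem_coe,
      Finset.mem_filter, Finset.mem_univ, true_and]
    constructor
    · rintro ⟨hcard, hsub, hpw⟩
      obtain ⟨e, f, hef, rfl⟩ := Finset.card_eq_two.1 hcard
      have hee : e ∈ (KGraph' k t ℓ).edgeSet := hsub (by simp)
      have hfe : f ∈ (KGraph' k t ℓ).edgeSet := hsub (by simp)
      have hd1 : ∀ a ∈ e, a ∉ f := hpw (by simp) (by simp) hef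
      have hd2 : ∀ a ∈ f, a ∉ e := hpw (by simp) (by simp) hef.symm
      rcases edge_split hee with ⟨j, rfl⟩ | hue
      · obtain ⟨p, hp, hgp⟩ := helper_case hℓk j hfe
          ((edge_split hfe).resolve_left (by
            rintro ⟨j', rfl⟩
            exact hd1 c (by simp) (by simp))) hd1
        exact ⟨p, hp, hgp⟩
      · rcases edge_split hfe with ⟨j, rfl⟩ | huf
        · obtain ⟨p, hp, hgp⟩ := helper_case hℓk j hee hue hd2
          exact ⟨p, hp, by rw [hgp, Finset.pair_comm]⟩
        · exact absurd (hd1 u hue) (not_not.2 huf)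
    · rintro ⟨p, hp, rfl⟩
      refine ⟨?_, matching_gM hℓk hp⟩
      obtain ⟨j, x⟩ := p
      rw [gM, Finset.card_insert_of_notMem (by simp [star_ne_uE hℓk j x]),
        Finset.card_singleton]
  have hcount : (Finset.univ.filter (PM (k := k) (t := t) (ℓ := ℓ))).card
      = k * (ℓ + t) - ℓ := by
    have htot : (Finset.univ : Finset (Fin k × (Fin ℓ ⊕ Fin t))).card = k * (ℓ + t) := by
      simp [Finset.card_univ]
    have hneg : (Finset.univ.filter (fun p => ¬ PM (k := k) (t := t) (ℓ := ℓ) p))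
        = Finset.univ.image (fun j' : Fin ℓ => ((Fin.castLE hℓk j', Sum.inl j') :
            Fin k × (Fin ℓ ⊕ Fin t))) := by
      ext ⟨j, x⟩
      simp only [Finset.mem_filter, Finset.mem_univ, true_and, Finset.mem_image, PM, not_forall]
      constructor
      · rintro ⟨j', hj', hval⟩
        rw [not_not] at hval
        exact ⟨j', by rw [Prod.mk.injEq]; exact ⟨(Fin.ext hval : Fin.castLE hℓk j' = j), hj'.symm⟩⟩
      · rintro ⟨j', hj'⟩
        rw [Prod.mk.injEq] at hj'
        exact ⟨j', hj'.2.symm, not_not.2 (by rw [← hj'.1]; rfl)⟩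
    have hnegcard : (Finset.univ.filter (fun p => ¬ PM (k := k) (t := t) (ℓ := ℓ) p)).card
        = ℓ := by
      rw [hneg, Finset.card_image_of_injective _ (fun a b hab => by
        injection hab with h1 h2; exact Sum.inl.inj h2), Finset.card_univ, Fintype.card_fin]
    have := Finset.card_filter_add_card_filter_not
      (s := (Finset.univ : Finset (Fin k × (Fin ℓ ⊕ Fin t))))
      (p := PM (k := k) (t := t) (ℓ := ℓ))
    omega
  rw [SimpleGraph.numMatchings, hset, Set.ncard_coe_finset,
    Finset.card_image_of_injective _ (gM_inj hℓk), hcount]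

end KG6


/-- The matching polynomial of `K'(k,t;ℓ)` is `x^(k+t-2) (x⁴ - (k+t+ℓ+1)x² + (ℓ+t)(k-1) + t)`
(stated with both sides multiplied by `x`, so that the exponent `k+t-2` need not be a natural
number). -/
theorem matchingPolynomial_KGraph' (k t ℓ : ℕ) (hk : 1 ≤ k) (hℓ : 1 ≤ ℓ) (hℓk : ℓ ≤ k) :
    X * (KGraph' k t ℓ).matchingPolynomial =
      X ^ (k + t - 1) *
        (X ^ 4 - C ((k : ℝ) + (t : ℝ) + (ℓ : ℝ) + 1) * X ^ 2 +
          C (((ℓ : ℝ) + (t : ℝ)) * ((k : ℝ) - 1) + (t : ℝ))) := by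
  classical
  have hcard : Fintype.card (Option (Option (Fin k) ⊕ Fin t)) = k + t + 2 := by
    simp [Fintype.card_option, Fintype.card_sum]; ring
  rw [SimpleGraph.matchingPolynomial, hcard]
  have hsub : ({0, 1, 2} : Finset ℕ) ⊆ Finset.range (k + t + 2 + 1) := by
    intro x hx; fin_cases hx <;> simp <;> omega
  rw [← Finset.sum_subset hsub (fun j _ hj => by
    rw [KG2.numMatchings_ge_three j (by simp at hj; omega)]
    simp)]
  rw [show ({0, 1, 2} : Finset ℕ) = insert 0 (insert 1 {2}) from rfl,
    Finset.sum_insert (by decide), Finset.sum_insert (by decide), Finset.sum_singleton,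
    KG2.numMatchings_zero, KG4.numMatchings_one hℓk, KG6.numMatchings_two hℓk]
  have hle : ℓ ≤ k * (ℓ + t) := le_trans hℓk (le_trans (Nat.le_mul_of_pos_right k (by omega))
    (le_refl _))
  obtain ⟨m, hm⟩ : ∃ m, k + t = m + 1 := ⟨k + t - 1, by omega⟩
  rcases Nat.eq_zero_or_pos m with rfl | hmpos
  · -- k = 1, t = 0, ℓ = 1
    obtain ⟨rfl, rfl⟩ : k = 1 ∧ t = 0 := by omega
    obtain rfl : ℓ = 1 := by omega
    norm_num
    ring
  · obtain ⟨p, rfl⟩ : ∃ p, m = p + 1 := ⟨m - 1, by omega⟩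
    have E0 : k + t + 2 - 2 * 0 = p + 4 := by omega
    have E1 : k + t + 2 - 2 * 1 = p + 2 := by omega
    have E2 : k + t + 2 - 2 * 2 = p := by omega
    have E3 : k + t - 1 = p + 1 := by omega
    rw [E0, E1, E2, E3, Nat.cast_sub hle]
    push_cast
    simp only [map_add, map_sub, map_mul, map_neg, map_one, map_natCast, map_pow, Polynomial.C_1, Polynomial.C_neg]
    norm_num
    ring
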